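/- Let x_0 be the family with (x_0)_{−j;i} = −C_{−j;i} for all j ≥ 1 and 1 ≤ i ≤ n, and for j ≥ 1, 1 ≤ i ≤ n set D_{−j;i} := σ_{−j;i}(x_0) + C_{−j;i}. Then: (i) if D_{−j;i} ≤ 0, then C_{−j;i} = 0; (ii) if D_{−j;i} > 0, then D_{−j;i} = C_{−j;i}. -/

import Mathlib

noncomputable section

/-- `C_{−j;i} = max(0, −λ_{i−j+1}, −λ_{i−j+1}−λ_{i−j+2}, …,
−λ_{i−j+1}−⋯−λ_{n−j+1})` if `1 ≤ j ≤ i ≤ n`, and `0` otherwise. -/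
def CA (lam : ℤ → ℤ) (n j i : ℤ) : ℤ :=
  if 1 ≤ j ∧ j ≤ i ∧ i ≤ n then
    (Finset.Icc (i - j + 1) (n - j + 1)).fold max 0
      (fun m => -(∑ t ∈ Finset.Icc (i - j + 1) m, lam t))
  else 0

/-- The coordinate `x_{−j';i'}` of a family, with the convention that it is `0`
unless `1 ≤ i' ≤ n`. -/
def XA (n : ℤ) (x : ℤ → ℤ → ℤ) (j' i' : ℤ) : ℤ :=
  if 1 ≤ i' ∧ i' ≤ n then x j' i' else 0

/-- `σ_{−j;i}(x) = −λ_i + x_{−j;i} − x_{−j;i+1}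
+ Σ_{j'=1}^{j−1} (2 x_{−j';i} − x_{−j';i−1} − x_{−j';i+1})`;
here `x j i` denotes the coordinate `x_{−j;i}`. -/
def sigmaA (lam : ℤ → ℤ) (n : ℤ) (x : ℤ → ℤ → ℤ) (j i : ℤ) : ℤ :=
  -lam i + XA n x j i - XA n x j (i + 1) +
    ∑ j' ∈ Finset.Icc 1 (j - 1),
      (2 * XA n x j' i - XA n x j' (i - 1) - XA n x j' (i + 1))

end

namespace HN55

/-- Sum of `lam` over the integer interval `[p, q]`. -/
noncomputable def SS (lam : ℤ → ℤ) (p q : ℤ) : ℤ := ∑ t ∈ Finset.Icc p q, lam t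

/-- `max(0, -(sum of lam over [p,q]))`. -/
noncomputable def gg (lam : ℤ → ℤ) (p q : ℤ) : ℤ := max 0 (-(SS lam p q))

lemma sum_split (f : ℤ → ℤ) (p q r : ℤ) (h1 : p ≤ q + 1) (h2 : q ≤ r) :
    ∑ t ∈ Finset.Icc p r, f t
      = (∑ t ∈ Finset.Icc p q, f t) + ∑ t ∈ Finset.Icc (q + 1) r, f t := by
  have h0 : Finset.Icc p r = Finset.Icc p q ∪ Finset.Icc (q + 1) r := by
    ext t; simp only [Finset.mem_Icc, Finset.mem_union]; omega
  rw [h0, Finset.sum_union]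
  rw [Finset.disjoint_left]
  intro t ht ht'
  simp only [Finset.mem_Icc] at ht ht'
  omega

lemma SS_split (lam : ℤ → ℤ) (p q r : ℤ) (h1 : p ≤ q + 1) (h2 : q ≤ r) :
    SS lam p r = SS lam p q + SS lam (q + 1) r :=
  sum_split lam p q r h1 h2

lemma SS_single (lam : ℤ → ℤ) (p : ℤ) : SS lam p p = lam p := by
  simp [SS]

section
variable {lam : ℤ → ℤ} {n i0 : ℤ}

lemma SS_nonneg (hpos : ∀ i : ℤ, 1 ≤ i → i ≤ i0 → 0 < lam i)
    {p q : ℤ} (hp : 1 ≤ p) (hq : q ≤ i0) : 0 ≤ SS lam p q := by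
  apply Finset.sum_nonneg
  intro t ht
  rw [Finset.mem_Icc] at ht
  exact le_of_lt (hpos t (by omega) (by omega))

lemma SS_nonpos (hneg : ∀ i : ℤ, i0 < i → i ≤ n → lam i ≤ 0)
    {p q : ℤ} (hp : i0 < p) (hq : q ≤ n) : SS lam p q ≤ 0 := by
  apply Finset.sum_nonpos
  intro t ht
  rw [Finset.mem_Icc] at ht
  exact hneg t (by omega) (by omega)

lemma tele (G : ℤ → ℤ) : ∀ k : ℤ, 0 ≤ k →
    ∑ j' ∈ Finset.Icc 1 k, (G (j' + 1) - G j') = G (k + 1) - G 1 := by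
  refine Int.le_induction
    (motive := fun k _ => ∑ j' ∈ Finset.Icc 1 k, (G (j' + 1) - G j') = G (k + 1) - G 1) ?_ ?_
  · show ∑ j' ∈ Finset.Icc (1:ℤ) 0, (G (j' + 1) - G j') = G (0 + 1) - G 1
    rw [Finset.Icc_eq_empty (by omega)]; simp
  · intro k hk ih
    show ∑ j' ∈ Finset.Icc (1:ℤ) (k+1), (G (j' + 1) - G j') = G (k + 1 + 1) - G 1
    rw [show Finset.Icc (1:ℤ) (k+1) = insert (k+1) (Finset.Icc 1 k) by
          ext t; simp only [Finset.mem_Icc, Finset.mem_insert]; omega,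
        Finset.sum_insert (by simp only [Finset.mem_Icc]; omega), ih]
    ring

lemma CA_eq (hpos : ∀ i : ℤ, 1 ≤ i → i ≤ i0 → 0 < lam i)
    (hneg : ∀ i : ℤ, i0 < i → i ≤ n → lam i ≤ 0)
    {j i : ℤ} (hj : 1 ≤ j) (hji : j ≤ i) (hin : i ≤ n + 1) :
    CA lam n j i = gg lam (i - j + 1) (n - j + 1) := by
  by_cases hi : i ≤ n
  · unfold CA
    rw [if_pos ⟨hj, hji, hi⟩]
    apply le_antisymm
    · rw [Finset.fold_max_le]
      refine ⟨le_max_left _ _, fun m hm => ?_⟩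
      rw [Finset.mem_Icc] at hm
      rcases le_or_gt i0 m with h | h
      · have e : SS lam (i-j+1) (n-j+1) = SS lam (i-j+1) m + SS lam (m+1) (n-j+1) :=
          SS_split lam _ _ _ (by omega) (by omega)
        have e2 : SS lam (m+1) (n-j+1) ≤ 0 := SS_nonpos hneg (by omega) (by omega)
        have : -(SS lam (i-j+1) m) ≤ -(SS lam (i-j+1) (n-j+1)) := by linarith
        exact le_trans this (le_max_right _ _)
      · have e3 : 0 ≤ SS lam (i-j+1) m := SS_nonneg hpos (by omega) (by omega)
        exact le_trans (by linarith : -(SS lam (i-j+1) m) ≤ 0) (le_max_left _ _)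
    · apply max_le
      · exact (Finset.le_fold_max _).mpr (Or.inl le_rfl)
      · exact (Finset.le_fold_max _).mpr
          (Or.inr ⟨n - j + 1, Finset.mem_Icc.mpr ⟨by omega, le_rfl⟩, le_rfl⟩)
  · unfold CA
    rw [if_neg (by omega)]
    have hempty : Finset.Icc (i - j + 1) (n - j + 1) = ∅ := Finset.Icc_eq_empty (by omega)
    unfold gg SS
    rw [hempty]
    simp

lemma posL (hpos : ∀ i : ℤ, 1 ≤ i → i ≤ i0 → 0 < lam i)
    (hneg : ∀ i : ℤ, i0 < i → i ≤ n → lam i ≤ 0)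
    {a N : ℤ} (ha : 1 ≤ a) (haN : a ≤ N) (hNn : N ≤ n) (hC : SS lam a N < 0)
    {m R : ℤ} (ham : a ≤ m) (hmR : m ≤ R + 1) (hNR : N ≤ R) (hRn : R ≤ n) :
    SS lam m R ≤ 0 := by
  have hi0N : i0 ≤ N := by
    by_contra h
    have := SS_nonneg hpos (p := a) (q := N) ha (by omega)
    omega
  rcases le_or_gt m i0 with h | h
  · have e1 : SS lam a R = SS lam a (m-1) + SS lam m R := by
      have := SS_split lam a (m-1) R (by omega) (by omega)
      rw [show m - 1 + 1 = m by ring] at this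
      exact this
    have e2 : SS lam a R = SS lam a N + SS lam (N+1) R := SS_split lam a N R (by omega) hNR
    have e3 : 0 ≤ SS lam a (m-1) := SS_nonneg hpos ha (by omega)
    have e4 : SS lam (N+1) R ≤ 0 := SS_nonpos hneg (by omega) hRn
    linarith
  · exact SS_nonpos hneg (by omega) hRn

lemma keyL (hpos : ∀ i : ℤ, 1 ≤ i → i ≤ i0 → 0 < lam i)
    (hneg : ∀ i : ℤ, i0 < i → i ≤ n → lam i ≤ 0)
    {m R : ℤ} (hm : 1 ≤ m) (hmR : m + 1 ≤ R) (hRn : R ≤ n) :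
    gg lam m R - gg lam (m+1) R ≤ gg lam m (R-1) - gg lam (m+1) (R-1) := by
  have sp1 : SS lam m R = lam m + SS lam (m+1) R := by
    have := SS_split lam m m R (by omega) (by omega)
    rw [SS_single] at this; exact this
  have sp2 : SS lam m (R-1) = lam m + SS lam (m+1) (R-1) := by
    have := SS_split lam m m (R-1) (by omega) (by omega)
    rw [SS_single] at this; exact this
  have sp3 : SS lam (m+1) R = SS lam (m+1) (R-1) + lam R := by
    have := SS_split lam (m+1) (R-1) R (by omega) (by omega)
    rw [show R - 1 + 1 = R by ring, SS_single] at this; exact this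
  rcases le_or_gt (lam m) 0 with h | h
  · have hi0 : i0 < m := by
      by_contra h'
      have := hpos m hm (by omega); omega
    have n1 : SS lam (m+1) R ≤ 0 := SS_nonpos hneg (by omega) hRn
    have n2 : SS lam (m+1) (R-1) ≤ 0 := SS_nonpos hneg (by omega) (by omega)
    unfold gg
    rw [max_eq_right (by linarith : (0:ℤ) ≤ -(SS lam m R)),
        max_eq_right (by linarith : (0:ℤ) ≤ -(SS lam (m+1) R)),
        max_eq_right (by linarith : (0:ℤ) ≤ -(SS lam m (R-1))),
        max_eq_right (by linarith : (0:ℤ) ≤ -(SS lam (m+1) (R-1)))]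
    linarith
  · rcases le_or_gt (lam R) 0 with hR | hR
    · unfold gg
      simp only [max_def]
      split_ifs <;> omega
    · have hRi0 : R ≤ i0 := by
        by_contra h'
        have := hneg R (by omega) hRn; omega
      have p1 : 0 ≤ SS lam m R := SS_nonneg hpos (by omega) (by omega)
      have p2 : 0 ≤ SS lam (m+1) R := SS_nonneg hpos (by omega) (by omega)
      have p3 : 0 ≤ SS lam m (R-1) := SS_nonneg hpos (by omega) (by omega)
      have p4 : 0 ≤ SS lam (m+1) (R-1) := SS_nonneg hpos (by omega) (by omega)
      unfold gg
      rw [max_eq_left (by linarith : -(SS lam m R) ≤ 0),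
          max_eq_left (by linarith : -(SS lam (m+1) R) ≤ 0),
          max_eq_left (by linarith : -(SS lam m (R-1)) ≤ 0),
          max_eq_left (by linarith : -(SS lam (m+1) (R-1)) ≤ 0)]

lemma ggMono (hpos : ∀ i : ℤ, 1 ≤ i → i ≤ i0 → 0 < lam i)
    (hneg : ∀ i : ℤ, i0 < i → i ≤ n → lam i ≤ 0)
    {q : ℤ} (hq : 0 ≤ q) (hqn : q + 1 ≤ n) : gg lam 1 q ≤ gg lam 1 (q+1) := by
  have sp : SS lam 1 (q+1) = SS lam 1 q + lam (q+1) := by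
    have := SS_split lam 1 q (q+1) (by omega) (by omega)
    rw [SS_single] at this; exact this
  rcases le_or_gt (lam (q+1)) 0 with h | h
  · unfold gg
    apply max_le (le_max_left _ _)
    have := le_max_right 0 (-(SS lam 1 (q+1)))
    linarith
  · have hqi0 : q + 1 ≤ i0 := by
      by_contra h'
      have := hneg (q+1) (by omega) hqn; omega
    have p : 0 ≤ SS lam 1 q := SS_nonneg hpos le_rfl (by omega)
    unfold gg
    rw [max_eq_left (by linarith : -(SS lam 1 q) ≤ 0)]
    exact le_max_left _ _

lemma lastL (hpos : ∀ i : ℤ, 1 ≤ i → i ≤ i0 → 0 < lam i)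
    (hneg : ∀ i : ℤ, i0 < i → i ≤ n → lam i ≤ 0)
    {i : ℤ} (hi1 : 1 ≤ i) (hin : i ≤ n) :
    gg lam (i+1) n ≤ lam i + gg lam i n := by
  have sp : SS lam i n = lam i + SS lam (i+1) n := by
    have := SS_split lam i i n (by omega) (by omega)
    rw [SS_single] at this; exact this
  rcases le_or_gt (lam i) 0 with h | h
  · have hi0 : i0 < i := by
      by_contra h'
      have := hpos i hi1 (by omega); omega
    have hu : SS lam (i+1) n ≤ 0 := SS_nonpos hneg (by omega) le_rfl
    unfold gg
    rw [max_eq_right (by linarith : (0:ℤ) ≤ -(SS lam (i+1) n)),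
        max_eq_right (by linarith : (0:ℤ) ≤ -(SS lam i n))]
    linarith
  · unfold gg
    apply max_le
    · have := le_max_left 0 (-(SS lam i n)); linarith
    · have := le_max_right 0 (-(SS lam i n)); linarith

/-- The explicit formula for `D`. -/
noncomputable def Dval (lam : ℤ → ℤ) (n j i : ℤ) : ℤ :=
  -lam i + CA lam n j (i+1) +
    ∑ j' ∈ Finset.Icc 1 (j-1),
      (CA lam n j' (i-1) - 2 * CA lam n j' i + CA lam n j' (i+1))

lemma caseA (hpos : ∀ i : ℤ, 1 ≤ i → i ≤ i0 → 0 < lam i)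
    (hneg : ∀ i : ℤ, i0 < i → i ≤ n → lam i ≤ 0)
    {j i : ℤ} (hj : 1 ≤ j) (hji : j ≤ i) (hin : i ≤ n)
    (hS : SS lam (i-j+1) (n-j+1) < 0) :
    Dval lam n j i = -(SS lam (i-j+1) (n-j+1)) := by
  have key : ∀ j' ∈ Finset.Icc 1 (j-1),
      CA lam n j' (i-1) - 2 * CA lam n j' i + CA lam n j' (i+1)
        = lam (i-j'+1) - lam (i-j') := by
    intro j' hj'
    rw [Finset.mem_Icc] at hj'
    have c1 : CA lam n j' (i-1) = gg lam (i-j') (n-j'+1) := by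
      rw [CA_eq hpos hneg hj'.1 (by omega) (by omega), show i-1-j'+1 = i-j' by ring]
    have c2 : CA lam n j' i = gg lam (i-j'+1) (n-j'+1) :=
      CA_eq hpos hneg hj'.1 (by omega) (by omega)
    have c3 : CA lam n j' (i+1) = gg lam (i-j'+2) (n-j'+1) := by
      rw [CA_eq hpos hneg hj'.1 (by omega) (by omega), show i+1-j'+1 = i-j'+2 by ring]
    have s1 : SS lam (i-j') (n-j'+1) ≤ 0 :=
      posL hpos hneg (by omega) (by omega) (by omega) hS (by omega) (by omega) (by omega) (by omega)
    have s2 : SS lam (i-j'+1) (n-j'+1) ≤ 0 :=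
      posL hpos hneg (by omega) (by omega) (by omega) hS (by omega) (by omega) (by omega) (by omega)
    have s3 : SS lam (i-j'+2) (n-j'+1) ≤ 0 :=
      posL hpos hneg (by omega) (by omega) (by omega) hS (by omega) (by omega) (by omega) (by omega)
    have g1 : gg lam (i-j') (n-j'+1) = -(SS lam (i-j') (n-j'+1)) :=
      max_eq_right (by linarith)
    have g2 : gg lam (i-j'+1) (n-j'+1) = -(SS lam (i-j'+1) (n-j'+1)) :=
      max_eq_right (by linarith)
    have g3 : gg lam (i-j'+2) (n-j'+1) = -(SS lam (i-j'+2) (n-j'+1)) :=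
      max_eq_right (by linarith)
    have sp1 : SS lam (i-j') (n-j'+1) = lam (i-j') + SS lam (i-j'+1) (n-j'+1) := by
      have := SS_split lam (i-j') (i-j') (n-j'+1) (by omega) (by omega)
      rw [SS_single] at this; exact this
    have sp2 : SS lam (i-j'+1) (n-j'+1) = lam (i-j'+1) + SS lam (i-j'+2) (n-j'+1) := by
      have := SS_split lam (i-j'+1) (i-j'+1) (n-j'+1) (by omega) (by omega)
      rw [SS_single, show i-j'+1+1 = i-j'+2 by ring] at this; exact this
    rw [c1, c2, c3, g1, g2, g3]
    linarith
  unfold Dval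
  rw [Finset.sum_congr rfl key]
  have tsum : ∑ j' ∈ Finset.Icc 1 (j-1), (lam (i-j'+1) - lam (i-j'))
      = lam i - lam (i-j+1) := by
    have h := tele (fun m => lam (i-m+1)) (j-1) (by omega)
    have h2 : ∑ j' ∈ Finset.Icc 1 (j-1), (lam (i-j'+1) - lam (i-j'))
        = -∑ j' ∈ Finset.Icc 1 (j-1),
            ((fun m => lam (i-m+1)) (j'+1) - (fun m => lam (i-m+1)) j') := by
      rw [← Finset.sum_neg_distrib]
      apply Finset.sum_congr rfl
      intro j' _
      simp only
      rw [show i-(j'+1)+1 = i-j' by ring]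
      ring
    rw [h2, h]
    rw [show i-(j-1+1)+1 = i-j+1 by ring, show i-1+1 = i by ring]
    ring
  rw [tsum]
  have c4 : CA lam n j (i+1) = gg lam (i-j+2) (n-j+1) := by
    rw [CA_eq hpos hneg hj (by omega) (by omega), show i+1-j+1 = i-j+2 by ring]
  have s4 : SS lam (i-j+2) (n-j+1) ≤ 0 :=
    posL hpos hneg (by omega) (by omega) (by omega) hS (by omega) (by omega) (by omega) (by omega)
  have g4 : gg lam (i-j+2) (n-j+1) = -(SS lam (i-j+2) (n-j+1)) := max_eq_right (by linarith)
  have sp : SS lam (i-j+1) (n-j+1) = lam (i-j+1) + SS lam (i-j+2) (n-j+1) := by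
    have := SS_split lam (i-j+1) (i-j+1) (n-j+1) (by omega) (by omega)
    rw [SS_single, show i-j+1+1 = i-j+2 by ring] at this; exact this
  rw [c4, g4]
  linarith

lemma caseB (hpos : ∀ i : ℤ, 1 ≤ i → i ≤ i0 → 0 < lam i)
    (hneg : ∀ i : ℤ, i0 < i → i ≤ n → lam i ≤ 0)
    {j i : ℤ} (hj : 1 ≤ j) (hji : j ≤ i) (hin : i ≤ n)
    (hS : 0 ≤ SS lam (i-j+1) (n-j+1)) : Dval lam n j i ≤ 0 := by
  set G : ℤ → ℤ := fun m => gg lam (i-m+1) (n-m+1) - gg lam (i-m+2) (n-m+1) with hG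
  have key : ∀ j' ∈ Finset.Icc 1 (j-1),
      CA lam n j' (i-1) - 2 * CA lam n j' i + CA lam n j' (i+1) ≤ G (j'+1) - G j' := by
    intro j' hj'
    rw [Finset.mem_Icc] at hj'
    have c1 : CA lam n j' (i-1) = gg lam (i-j') (n-j'+1) := by
      rw [CA_eq hpos hneg hj'.1 (by omega) (by omega), show i-1-j'+1 = i-j' by ring]
    have c2 : CA lam n j' i = gg lam (i-j'+1) (n-j'+1) :=
      CA_eq hpos hneg hj'.1 (by omega) (by omega)
    have c3 : CA lam n j' (i+1) = gg lam (i-j'+2) (n-j'+1) := by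
      rw [CA_eq hpos hneg hj'.1 (by omega) (by omega), show i+1-j'+1 = i-j'+2 by ring]
    have hkey := keyL hpos hneg (m := i-j') (R := n-j'+1) (by omega) (by omega) (by omega)
    rw [show n-j'+1-1 = n-j' by ring] at hkey
    have hG1 : G (j'+1) = gg lam (i-j') (n-j') - gg lam (i-j'+1) (n-j') := by
      rw [hG]
      simp only
      rw [show i-(j'+1)+1 = i-j' by ring, show i-(j'+1)+2 = i-j'+1 by ring,
          show n-(j'+1)+1 = n-j' by ring]
    have hG2 : G j' = gg lam (i-j'+1) (n-j'+1) - gg lam (i-j'+2) (n-j'+1) := by rw [hG]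
    rw [c1, c2, c3, hG1, hG2]
    linarith
  have hsum := Finset.sum_le_sum key
  rw [tele G (j-1) (by omega)] at hsum
  have hGj : G (j-1+1) = gg lam (i-j+1) (n-j+1) - gg lam (i-j+2) (n-j+1) := by
    rw [hG]
    simp only
    rw [show j-1+1 = j by ring]
  have hG1' : G 1 = gg lam i n - gg lam (i+1) n := by
    rw [hG]
    simp only
    rw [show i-1+1 = i by ring, show i-1+2 = i+1 by ring, show n-1+1 = n by ring]
  rw [hGj, hG1'] at hsum
  have c4 : CA lam n j (i+1) = gg lam (i-j+2) (n-j+1) := by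
    rw [CA_eq hpos hneg hj (by omega) (by omega), show i+1-j+1 = i-j+2 by ring]
  have hgz : gg lam (i-j+1) (n-j+1) = 0 := max_eq_left (by linarith)
  have hlast : gg lam (i+1) n ≤ lam i + gg lam i n := lastL hpos hneg (by omega) hin
  unfold Dval
  rw [c4]
  linarith

lemma jgt {j i : ℤ} (hi1 : 1 ≤ i) (hij : i < j) :
    Dval lam n j i = Dval lam n i i + CA lam n (i+1) (i+1) - 2 * CA lam n i i := by
  have CA0 : ∀ j' i' : ℤ, i' < j' → CA lam n j' i' = 0 := by
    intro j' i' h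
    unfold CA
    rw [if_neg (by omega)]
  rcases eq_or_lt_of_le (show i + 1 ≤ j from hij) with he | hlt
  · rw [← he]
    unfold Dval
    rw [show i+1-1 = i by ring,
        show Finset.Icc (1:ℤ) i = insert i (Finset.Icc 1 (i-1)) by
          ext t; simp only [Finset.mem_Icc, Finset.mem_insert]; omega,
        Finset.sum_insert (by simp only [Finset.mem_Icc]; omega),
        CA0 i (i-1) (by omega)]
    ring
  · unfold Dval
    rw [sum_split (fun j' => CA lam n j' (i-1) - 2 * CA lam n j' i + CA lam n j' (i+1))
          1 (i+1) (j-1) (by omega) (by omega)]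
    have z1 : ∑ j' ∈ Finset.Icc (i+1+1) (j-1),
        (CA lam n j' (i-1) - 2 * CA lam n j' i + CA lam n j' (i+1)) = 0 := by
      apply Finset.sum_eq_zero
      intro j' hj'
      rw [Finset.mem_Icc] at hj'
      rw [CA0 j' (i-1) (by omega), CA0 j' i (by omega), CA0 j' (i+1) (by omega)]
      ring
    rw [z1,
        show Finset.Icc (1:ℤ) (i+1) = insert (i+1) (insert i (Finset.Icc 1 (i-1))) by
          ext t; simp only [Finset.mem_Icc, Finset.mem_insert]; omega,
        Finset.sum_insert (by simp only [Finset.mem_insert, Finset.mem_Icc]; omega),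
        Finset.sum_insert (by simp only [Finset.mem_Icc]; omega),
        CA0 j (i+1) (by omega), CA0 (i+1) (i-1) (by omega), CA0 (i+1) i (by omega),
        CA0 i (i-1) (by omega)]
    ring

end

end HN55

open HN55 in
/-- Type `A_n` (Hoshino–Nakashima, Lemma 5.5): with `x₀` the vector with
coordinates `(x₀)_{−j;i} = −C_{−j;i}` and `D_{−j;i} := σ_{−j;i}(x₀) + C_{−j;i}`,
one has, for all `j ≥ 1` and `1 ≤ i ≤ n`:
(i) if `D_{−j;i} ≤ 0` then `C_{−j;i} = 0`; (ii) if `D_{−j;i} > 0` then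
`D_{−j;i} = C_{−j;i}`. -/
theorem D_le_zero_imp_C_eq_zero_and_D_pos_imp_D_eq_C_A_n
    (n : ℤ) (hn : 1 ≤ n) (lam : ℤ → ℤ) (i0 : ℤ) (hi0 : 0 ≤ i0) (hi0n : i0 ≤ n)
    (hpos : ∀ i : ℤ, 1 ≤ i → i ≤ i0 → 0 < lam i)
    (hneg : ∀ i : ℤ, i0 < i → i ≤ n → lam i ≤ 0)
    (D : ℤ → ℤ → ℤ)
    (hD : ∀ j i : ℤ, D j i =
      sigmaA lam n (fun j' i' => -CA lam n j' i') j i + CA lam n j i) :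
    ∀ j i : ℤ, 1 ≤ j → 1 ≤ i → i ≤ n →
      (D j i ≤ 0 → CA lam n j i = 0) ∧ (0 < D j i → D j i = CA lam n j i) := by
  have hXA : ∀ j' i' : ℤ, XA n (fun j i => -CA lam n j i) j' i' = -CA lam n j' i' := by
    intro j' i'
    unfold XA
    split_ifs with h
    · rfl
    · have : CA lam n j' i' = 0 := by
        unfold CA
        rw [if_neg (by omega)]
      rw [this, neg_zero]
  have Dform : ∀ j i : ℤ, D j i = Dval lam n j i := by
    intro j i
    rw [hD j i]
    unfold sigmaA Dval
    simp only [hXA]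
    rw [show (∑ j' ∈ Finset.Icc 1 (j-1),
          (2 * -CA lam n j' i - -CA lam n j' (i-1) - -CA lam n j' (i+1)))
        = ∑ j' ∈ Finset.Icc 1 (j-1),
            (CA lam n j' (i-1) - 2 * CA lam n j' i + CA lam n j' (i+1)) from
      Finset.sum_congr rfl (fun _ _ => by ring)]
    ring
  intro j i hj hi1 hin
  by_cases hji : j ≤ i
  · have hCAe : CA lam n j i = max 0 (-(SS lam (i-j+1) (n-j+1))) :=
      CA_eq hpos hneg hj hji (by omega)
    rcases lt_or_ge (SS lam (i-j+1) (n-j+1)) 0 with hS | hS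
    · have hde : D j i = CA lam n j i := by
        rw [Dform, caseA hpos hneg hj hji hin hS, hCAe, max_eq_right (by linarith)]
      have hpos' : 0 < CA lam n j i := by
        rw [hCAe]
        exact lt_of_lt_of_le (by linarith : (0:ℤ) < -(SS lam (i-j+1) (n-j+1)))
          (le_max_right _ _)
      exact ⟨fun h => absurd (hde ▸ h) (not_le.mpr hpos'), fun _ => hde⟩
    · have hC0 : CA lam n j i = 0 := by
        rw [hCAe]; exact max_eq_left (by linarith)
      have hDle : D j i ≤ 0 := by
        rw [Dform]; exact caseB hpos hneg hj hji hin hS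
      exact ⟨fun _ => hC0, fun h => absurd h (not_lt.mpr hDle)⟩
  · push_neg at hji
    have hC0 : CA lam n j i = 0 := by
      unfold CA; rw [if_neg (by omega)]
    have hDle : D j i ≤ 0 := by
      rw [Dform, jgt hi1 hji]
      have hCAi : CA lam n i i = gg lam 1 (n-i+1) := by
        rw [CA_eq hpos hneg hi1 le_rfl (by omega), show i-i+1 = (1:ℤ) by ring]
      have hCAi1 : CA lam n (i+1) (i+1) = gg lam 1 (n-i) := by
        rw [CA_eq hpos hneg (by omega) le_rfl (by omega),
            show i+1-(i+1)+1 = (1:ℤ) by ring, show n-(i+1)+1 = n-i by ring]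
      have hmono : gg lam 1 (n-i) ≤ gg lam 1 (n-i+1) :=
        ggMono hpos hneg (by omega) (by omega)
      rcases lt_or_ge (SS lam 1 (n-i+1)) 0 with hS | hS
      · have hA : Dval lam n i i = -(SS lam 1 (n-i+1)) := by
          have := caseA hpos hneg (j := i) (i := i) hi1 le_rfl hin
            (by rw [show i-i+1 = (1:ℤ) by ring]; exact hS)
          rw [show i-i+1 = (1:ℤ) by ring] at this
          exact this
        have hCv : CA lam n i i = -(SS lam 1 (n-i+1)) := by
          rw [hCAi]; exact max_eq_right (by linarith)
        have hCv1 : CA lam n (i+1) (i+1) ≤ CA lam n i i := by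
          rw [hCAi, hCAi1]; exact hmono
        linarith
      · have hB : Dval lam n i i ≤ 0 := by
          apply caseB hpos hneg hi1 le_rfl hin
          rw [show i-i+1 = (1:ℤ) by ring]
          exact hS
        have hCv : CA lam n i i = 0 := by
          rw [hCAi]; exact max_eq_left (by linarith)
        have hCv1 : CA lam n (i+1) (i+1) ≤ 0 := by
          rw [hCAi1, ← hCv, hCAi]; exact hmono
        linarith
    exact ⟨fun _ => hC0, fun h => absurd h (not_lt.mpr hDle)⟩
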